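/- arXiv:2002.06189 — 6 statements merged into one kernel-verified Lean document; each statement's English description precedes it below -/
import Mathlib

section
/- Let f₀ : ℝᵈ → ℝ be μ-strongly convex and ν-smooth, 0 < η < 1/ν, and let ρ_∞ be an invariant distribution of the Markov chain x_{k+1} = x_k - η∇f₀(x_k) + ηζ_k with i.i.d. bounded mean-zero noise ζ. If ρ_k denotes the law of x_k started from any initial law with finite second moment, then the 2-Wasserstein distance satisfies W₂(ρ_k, ρ_∞) ≤ (1-ημ)^k · C for some constant C ≥ 0 depending only on the initial law and ρ_∞. -/
open MeasureTheory ProbabilityTheory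

open RealInnerProductSpace

section Aux
variable {E : Type*} [NormedAddCommGroup E] [InnerProductSpace ℝ E] [CompleteSpace E]

lemma aux_lineDeriv (g : E → ℝ) (G : E → E) (hg : ∀ u, HasGradientAt g (G u) u)
    (x v : E) (t : ℝ) :
    HasDerivAt (fun s : ℝ => g (x + s • v)) ⟪G (x + t • v), v⟫ t := by
  have hc : HasDerivAt (fun s : ℝ => x + s • v) v t := by
    simpa using ((hasDerivAt_id t).smul_const v).const_add x
  have hf := hasGradientAt_iff_hasFDerivAt.mp (hg (x + t • v))
  simpa [InnerProductSpace.toDual_apply_apply, Function.comp_def] using hf.comp_hasDerivAt t hc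

lemma aux_support (g : E → ℝ) (G : E → E) (hg : ∀ u, HasGradientAt g (G u) u)
    (hconv : ConvexOn ℝ Set.univ g) (x y : E) :
    g x + ⟪G x, y - x⟫ ≤ g y := by
  have hψ : ConvexOn ℝ Set.univ (fun s : ℝ => g (x + s • (y - x))) := by
    have h := hconv.comp_affineMap (AffineMap.lineMap x y)
    have : (fun s : ℝ => g (x + s • (y - x))) = (g ∘ (AffineMap.lineMap x y)) := by
      funext s
      simp [AffineMap.lineMap_apply, add_comm]
    rw [this]
    simpa using h
  have hd : HasDerivAt (fun s : ℝ => g (x + s • (y - x))) ⟪G x, y - x⟫ 0 := by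
    simpa using aux_lineDeriv g G hg x (y - x) 0
  have hs := hψ.le_slope_of_hasDerivAt (Set.mem_univ 0) (Set.mem_univ 1) one_pos hd
  rw [slope_def_field] at hs
  simp at hs
  linarith
end Aux

section Aux2
variable {E : Type*} [NormedAddCommGroup E] [InnerProductSpace ℝ E] [CompleteSpace E]

lemma aux_convex_of_monotone (g : E → ℝ) (G : E → E) (hg : ∀ u, HasGradientAt g (G u) u)
    (hmono : ∀ x y : E, 0 ≤ ⟪G x - G y, x - y⟫) : ConvexOn ℝ Set.univ g := by
  refine ⟨convex_univ, fun x _ y _ a b ha hb hab => ?_⟩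
  set v := y - x with hv
  have hψd : ∀ t : ℝ, HasDerivAt (fun s : ℝ => g (x + s • v)) ⟪G (x + t • v), v⟫ t :=
    fun t => aux_lineDeriv g G hg x v t
  have hψ : ConvexOn ℝ Set.univ (fun s : ℝ => g (x + s • v)) := by
    apply Monotone.convexOn_univ_of_deriv
    · exact fun t => ((hψd t).differentiableAt)
    · intro s t hst
      rw [(hψd s).deriv, (hψd t).deriv]
      have h := hmono (x + t • v) (x + s • v)
      have hd : (x + t • v) - (x + s • v) = (t - s) • v := by module
      rw [hd, real_inner_smul_right, inner_sub_left] at h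
      rcases eq_or_lt_of_le hst with rfl | hlt
      · exact le_rfl
      · nlinarith
  have key := hψ.2 (Set.mem_univ (0:ℝ)) (Set.mem_univ (1:ℝ)) ha hb hab
  have hxy : x + b • v = a • x + b • y := by
    rw [hv, show a = 1 - b by linarith]; module
  simp only [smul_eq_mul, mul_zero, mul_one, zero_add, zero_smul, add_zero, one_smul] at key
  rw [hxy] at key
  have hx1 : x + v = y := by rw [hv]; abel
  rw [hx1] at key
  simpa using key
end Aux2


section Aux3
variable {E : Type*} [NormedAddCommGroup E] [InnerProductSpace ℝ E] [CompleteSpace E]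

lemma aux_sq_expand (c : ℝ) (p q : E) :
    c / 2 * ‖q‖ ^ 2 - c / 2 * ‖p‖ ^ 2 - ⟪c • p, q - p⟫ = c / 2 * ‖q - p‖ ^ 2 := by
  rw [real_inner_smul_left, inner_sub_right, real_inner_self_eq_norm_sq,
    @norm_sub_sq_real, real_inner_comm]
  ring

lemma aux_hasGradientAt_half_sq (L : ℝ) (x : E) :
    HasGradientAt (fun u : E => L / 2 * ‖u‖ ^ 2) (L • x) x := by
  rw [hasGradientAt_iff_isLittleO]
  have heq : (fun y : E => L / 2 * ‖y‖ ^ 2 - L / 2 * ‖x‖ ^ 2 - ⟪L • x, y - x⟫)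
      = fun y : E => L / 2 * ‖y - x‖ ^ 2 := by
    funext y; exact aux_sq_expand L x y
  rw [heq]
  have h1 : (fun y : E => ‖y - x‖ ^ 2) =o[nhds x] fun y => y - x := by
    have ha : (fun t : ℝ => t ^ 2) =o[nhds (0:ℝ)] fun t => t :=
      Asymptotics.isLittleO_pow_id one_lt_two
    have hb : Filter.Tendsto (fun z : E => ‖z‖) (nhds 0) (nhds 0) := by
      simpa using (continuous_norm (E := E)).tendsto 0
    have h2 : (fun z : E => ‖z‖ ^ 2) =o[nhds (0:E)] (fun z : E => z) :=
      (ha.comp_tendsto hb).trans_isBigO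
        (Asymptotics.isBigO_norm_left.mpr (Asymptotics.isBigO_refl _ _))
    have h3 : Filter.Tendsto (fun y : E => y - x) (nhds x) (nhds 0) := by
      simpa using (continuous_id.tendsto x).sub_const x
    simpa [Function.comp_def] using h2.comp_tendsto h3
  simpa using h1.const_mul_left (L / 2)

lemma aux_cocoercive (g : E → ℝ) (G : E → E) (hg : ∀ u, HasGradientAt g (G u) u)
    (hconv : ConvexOn ℝ Set.univ g) (L : ℝ) (hL : 0 < L)
    (hB : ConvexOn ℝ Set.univ (fun u : E => L / 2 * ‖u‖ ^ 2 - g u)) (x y : E) :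
    ‖G x - G y‖ ^ 2 ≤ L * ⟪G x - G y, x - y⟫ := by
  have hGB : ∀ u : E, HasGradientAt (fun u : E => L / 2 * ‖u‖ ^ 2 - g u) (L • u - G u) u := by
    intro u
    have h1 := HasFDerivAt.sub (aux_hasGradientAt_half_sq L u) (hg u)
    exact hasGradientAt_iff_hasFDerivAt.mpr (by simpa [map_sub, Pi.sub_def] using h1)
  have half : ∀ a b : E, ‖G a - G b‖ ^ 2 ≤ 2 * L * (g a - g b - ⟪G b, a - b⟫) := by
    intro a b
    set z := a - (1 / L) • (G a - G b) with hz
    have h1 : g b + ⟪G b, z - b⟫ ≤ g z := aux_support g G hg hconv b z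
    have h2 : (L / 2 * ‖a‖ ^ 2 - g a) + ⟪L • a - G a, z - a⟫ ≤ L / 2 * ‖z‖ ^ 2 - g z :=
      aux_support _ _ hGB hB a z
    have hza : z - a = -(1 / L) • (G a - G b) := by rw [hz]; module
    have hzb : z - b = (a - b) - (1 / L) • (G a - G b) := by rw [hz]; module
    have hnorm := aux_sq_expand L a z
    have h3 : g z ≤ g a + ⟪G a, z - a⟫ + L / 2 * ‖z - a‖ ^ 2 := by
      rw [inner_sub_left] at h2
      nlinarith [h2, hnorm]
    have e1 : ⟪G b, z - b⟫ = ⟪G b, a - b⟫ - (1/L) * ⟪G b, G a - G b⟫ := by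
      rw [hzb, inner_sub_right, real_inner_smul_right]
    have e2 : ⟪G a, z - a⟫ = -(1/L) * ⟪G a, G a - G b⟫ := by
      rw [hza, real_inner_smul_right]
    have e3 : ‖z - a‖ ^ 2 = (1/L)^2 * ‖G a - G b‖ ^ 2 := by
      rw [hza, norm_smul]
      simp [abs_of_pos (show (0:ℝ) < 1/L by positivity), mul_pow]
    have e4 : ⟪G a, G a - G b⟫ - ⟪G b, G a - G b⟫ = ‖G a - G b‖ ^ 2 := by
      rw [← inner_sub_left, real_inner_self_eq_norm_sq]
    rw [e1] at h1; rw [e2, e3] at h3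
    have goal1 : ‖G a - G b‖^2 / (2*L) ≤ g a - g b - ⟪G b, a - b⟫ := by
      have hcalc : (1/L) * ‖G a - G b‖^2 - L/2 * ((1/L)^2 * ‖G a - G b‖^2)
          = ‖G a - G b‖^2 / (2*L) := by
        field_simp; ring
      have e4' : (1/L) * ⟪G a, G a - G b⟫ - (1/L) * ⟪G b, G a - G b⟫
          = (1/L) * ‖G a - G b‖ ^ 2 := by rw [← mul_sub, e4]
      linarith [h1, h3, e4', hcalc]
    have := (div_le_iff₀ (show (0:ℝ) < 2*L by positivity)).mp goal1
    linarith
  have hxy := half x y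
  have hyx := half y x
  have h7sq : ‖G y - G x‖ ^ 2 = ‖G x - G y‖ ^ 2 := by rw [norm_sub_rev]
  rw [h7sq] at hyx
  have key2 : 2 * (L * ⟪G x - G y, x - y⟫)
      = 2 * L * (g x - g y - ⟪G y, x - y⟫) + 2 * L * (g y - g x - ⟪G x, y - x⟫) := by
    have h5 : ⟪G x - G y, x - y⟫ = ⟪G x, x - y⟫ - ⟪G y, x - y⟫ := inner_sub_left _ _ _
    have h6 : ⟪G x, y - x⟫ = -⟪G x, x - y⟫ := by
      rw [show y - x = -(x - y) by abel, inner_neg_right]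
    rw [h5, h6]; ring
  linarith
end Aux3

section Contraction
variable {E : Type*} [NormedAddCommGroup E] [InnerProductSpace ℝ E] [CompleteSpace E]

lemma aux_contraction (f : E → ℝ) (μ ν : ℝ) (hμ : 0 < μ) (hμν : μ ≤ ν)
    (hC2 : ContDiff ℝ 2 f)
    (hsc : ConvexOn ℝ Set.univ (fun x => f x - μ / 2 * ‖x‖ ^ 2))
    (hsm : LipschitzWith (Real.toNNReal ν) (gradient f))
    (η : ℝ) (hη0 : 0 < η) (hη1 : η * ν < 1) (x y : E) :
    ‖(x - η • gradient f x) - (y - η • gradient f y)‖ ≤ (1 - η * μ) * ‖x - y‖ := by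
  have hν : 0 < ν := lt_of_lt_of_le hμ hμν
  have hd : ∀ u, HasGradientAt f (gradient f u) u := fun u =>
    ((hC2.differentiable (by norm_num)) u).hasGradientAt
  set G := gradient f with hG
  have hlip : ∀ a b : E, ‖G a - G b‖ ≤ ν * ‖a - b‖ := by
    intro a b
    have := hsm.dist_le_mul a b
    rwa [dist_eq_norm, dist_eq_norm, Real.coe_toNNReal ν hν.le] at this
  have hGA : ∀ u : E, HasGradientAt (fun u : E => f u - μ / 2 * ‖u‖ ^ 2) (G u - μ • u) u := by
    intro u
    exact hasGradientAt_iff_hasFDerivAt.mpr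
      (by simpa [map_sub, Pi.sub_def] using HasFDerivAt.sub (hd u) (aux_hasGradientAt_half_sq μ u))
  have hGB : ∀ u : E, HasGradientAt (fun u : E => ν / 2 * ‖u‖ ^ 2 - f u) (ν • u - G u) u := by
    intro u
    exact hasGradientAt_iff_hasFDerivAt.mpr
      (by simpa [map_sub, Pi.sub_def] using HasFDerivAt.sub (aux_hasGradientAt_half_sq ν u) (hd u))
  have hmonoA : ∀ a b : E, 0 ≤ ⟪(G a - μ • a) - (G b - μ • b), a - b⟫ := by
    intro a b
    have h1 := aux_support _ _ hGA hsc a b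
    have h2 := aux_support _ _ hGA hsc b a
    have e1 : ⟪(G a - μ • a) - (G b - μ • b), a - b⟫
        = -(⟪G a - μ • a, b - a⟫ + ⟪G b - μ • b, a - b⟫) := by
      rw [inner_sub_left, show b - a = -(a - b) by abel, inner_neg_right]; ring
    rw [e1]; linarith
  have hstrong : ∀ a b : E, μ * ‖a - b‖ ^ 2 ≤ ⟪G a - G b, a - b⟫ := by
    intro a b
    have h := hmonoA a b
    have e1 : (G a - μ • a) - (G b - μ • b) = (G a - G b) - μ • (a - b) := by module
    rw [e1, inner_sub_left, real_inner_smul_left, real_inner_self_eq_norm_sq] at h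
    linarith
  have hBconv : ConvexOn ℝ Set.univ (fun u : E => ν / 2 * ‖u‖ ^ 2 - f u) := by
    apply aux_convex_of_monotone _ _ hGB
    intro a b
    have e1 : (ν • a - G a) - (ν • b - G b) = ν • (a - b) - (G a - G b) := by module
    rw [e1, inner_sub_left, real_inner_smul_left, real_inner_self_eq_norm_sq]
    have h2 : ⟪G a - G b, a - b⟫ ≤ ν * ‖a - b‖ ^ 2 := by
      calc ⟪G a - G b, a - b⟫ ≤ ‖G a - G b‖ * ‖a - b‖ := real_inner_le_norm _ _
        _ ≤ ν * ‖a - b‖ * ‖a - b‖ := by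
            have := hlip a b
            nlinarith [norm_nonneg (a - b)]
        _ = ν * ‖a - b‖ ^ 2 := by ring
    linarith
  have hμη : 0 ≤ 1 - η * μ := by nlinarith
  have hsq : ‖(x - η • G x) - (y - η • G y)‖ ^ 2 ≤ ((1 - η * μ) * ‖x - y‖) ^ 2 := by
    set h := x - y with hh
    rcases eq_or_lt_of_le hμν with rfl | hlt
    · have hfconv : ConvexOn ℝ Set.univ f := by
        apply aux_convex_of_monotone _ _ hd
        intro a b
        have := hstrong a b
        nlinarith [sq_nonneg ‖a - b‖, norm_nonneg (a - b)]
      have cc := aux_cocoercive f G hd hfconv μ hμ hBconv x y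
      have hst := hstrong x y
      have hw : (x - η • G x) - (y - η • G y) = h - η • (G x - G y) := by rw [hh]; module
      rw [hw, @norm_sub_sq_real, real_inner_smul_right, norm_smul]
      have e2 : ⟪h, G x - G y⟫ = ⟪G x - G y, h⟫ := real_inner_comm _ _
      rw [e2]
      have e3 : (‖η‖ * ‖G x - G y‖) ^ 2 = η ^ 2 * ‖G x - G y‖ ^ 2 := by
        rw [mul_pow, Real.norm_eq_abs, sq_abs]
      rw [e3]
      nlinarith [cc, hst, sq_nonneg ‖G x - G y‖, mul_nonneg hη0.le (sub_nonneg.mpr hη1.le),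
        mul_nonneg (mul_nonneg hη0.le (by linarith : (0:ℝ) ≤ 2 - η * μ))
          (sub_nonneg.mpr hst)]
    · have hAB : ConvexOn ℝ Set.univ
          (fun u : E => (ν - μ) / 2 * ‖u‖ ^ 2 - (f u - μ / 2 * ‖u‖ ^ 2)) := by
        have he : (fun u : E => (ν - μ) / 2 * ‖u‖ ^ 2 - (f u - μ / 2 * ‖u‖ ^ 2))
            = fun u : E => ν / 2 * ‖u‖ ^ 2 - f u := by funext u; ring
        rw [he]; exact hBconv
      have cc := aux_cocoercive _ _ hGA hsc (ν - μ) (by linarith) hAB x y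
      have hJ := hmonoA x y
      set Gp := (G x - μ • x) - (G y - μ • y) with hGp
      have hw : (x - η • G x) - (y - η • G y) = (1 - η * μ) • h - η • Gp := by
        rw [hGp, hh]; module
      set J := ⟪Gp, h⟫ with hJdef
      have hJ0 : 0 ≤ J := hJ
      have ccJ : ‖Gp‖ ^ 2 ≤ (ν - μ) * J := cc
      rw [hw, @norm_sub_sq_real]
      have e1 : ⟪(1 - η * μ) • h, η • Gp⟫ = (1 - η * μ) * η * J := by
        rw [real_inner_smul_left, real_inner_smul_right, real_inner_comm]
        ring
      have e2 : ‖(1 - η * μ) • h‖ ^ 2 = (1 - η * μ) ^ 2 * ‖h‖ ^ 2 := by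
        rw [norm_smul, mul_pow, Real.norm_eq_abs, sq_abs]
      have e3 : ‖η • Gp‖ ^ 2 = η ^ 2 * ‖Gp‖ ^ 2 := by
        rw [norm_smul, mul_pow, Real.norm_eq_abs, sq_abs]
      rw [e1, e2, e3]
      have hcoef : 0 ≤ 2 * (1 - η * μ) - η * (ν - μ) := by nlinarith
      nlinarith [ccJ, hJ0, mul_nonneg (mul_nonneg hη0.le hcoef) hJ0, sq_nonneg η]
  calc ‖(x - η • G x) - (y - η • G y)‖
      = Real.sqrt (‖(x - η • G x) - (y - η • G y)‖ ^ 2) :=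
        (Real.sqrt_sq (norm_nonneg _)).symm
    _ ≤ Real.sqrt (((1 - η * μ) * ‖x - y‖) ^ 2) := Real.sqrt_le_sqrt hsq
    _ = (1 - η * μ) * ‖x - y‖ := Real.sqrt_sq (by positivity)
end Contraction

/-- The 2-Wasserstein distance between two measures on `ℝᵈ`, defined via couplings. -/
noncomputable def W2 {d : ℕ} (μ ν : Measure (EuclideanSpace ℝ (Fin d))) : ℝ :=
  Real.sqrt (sInf { r : ℝ |
    ∃ π : Measure (EuclideanSpace ℝ (Fin d) × EuclideanSpace ℝ (Fin d)),
      π.map Prod.fst = μ ∧ π.map Prod.snd = ν ∧ r = ∫ p, ‖p.1 - p.2‖ ^ 2 ∂π })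

/-- geometric ergodicity of the stochastic GD map in 2-Wasserstein distance:
`W₂(ρ_k, ρ_∞) ≤ (1-ημ)^k C`. -/
theorem stmt_2 (d : ℕ) (f₀ : EuclideanSpace ℝ (Fin d) → ℝ) (μ ν : ℝ)
    (hμ : 0 < μ) (hμν : μ ≤ ν)
    (hC2 : ContDiff ℝ 2 f₀)
    (hsc : ConvexOn ℝ Set.univ (fun x => f₀ x - μ / 2 * ‖x‖ ^ 2))
    (hsm : LipschitzWith (Real.toNNReal ν) (gradient f₀))
    (η : ℝ) (hη0 : 0 < η) (hη1 : η < 1 / ν)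
    (Ω : Type*) [MeasureSpace Ω] (P : Measure Ω) [IsProbabilityMeasure P]
    (ζ : ℕ → Ω → EuclideanSpace ℝ (Fin d))
    (hζmeas : ∀ k, Measurable (ζ k))
    (hζbdd : ∃ B : ℝ, ∀ k ω, ‖ζ k ω‖ ≤ B)
    (hζmean : ∀ k, ∫ ω, ζ k ω ∂P = 0)
    (hζindep : iIndepFun ζ P)
    (hζident : ∀ i j, Measure.map (ζ i) P = Measure.map (ζ j) P)
    -- the chain started from an arbitrary initial law with finite second moment
    (x : ℕ → Ω → EuclideanSpace ℝ (Fin d))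
    (hx : ∀ k ω, x (k + 1) ω = x k ω - η • gradient f₀ (x k ω) + η • ζ k ω)
    (hxmeas : ∀ k, Measurable (x k))
    (hx2 : Integrable (fun ω => ‖x 0 ω‖ ^ 2) P)
    -- ρ∞ is an invariant distribution: a stationary copy of the chain driven by the same noise
    (ρ_inf : Measure (EuclideanSpace ℝ (Fin d))) [IsProbabilityMeasure ρ_inf]
    (y : ℕ → Ω → EuclideanSpace ℝ (Fin d))
    (hy : ∀ k ω, y (k + 1) ω = y k ω - η • gradient f₀ (y k ω) + η • ζ k ω)
    (hymeas : ∀ k, Measurable (y k))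
    (hy2 : Integrable (fun ω => ‖y 0 ω‖ ^ 2) P)
    (hyinv : ∀ k, Measure.map (y k) P = ρ_inf) :
    ∃ C : ℝ, 0 ≤ C ∧ ∀ k, W2 (Measure.map (x k) P) ρ_inf ≤ (1 - η * μ) ^ k * C := by
  have hν : 0 < ν := lt_of_lt_of_le hμ hμν
  have hην : η * ν < 1 := by
    have := (lt_div_iff₀ hν).mp hη1
    linarith
  have hfac0 : 0 ≤ 1 - η * μ := by nlinarith
  have hcontr := aux_contraction f₀ μ ν hμ hμν hC2 hsc hsm η hη0 hην
  -- pointwise geometric contraction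
  have hpt : ∀ k, ∀ ω, ‖x k ω - y k ω‖ ≤ (1 - η * μ) ^ k * ‖x 0 ω - y 0 ω‖ := by
    intro k
    induction k with
    | zero => intro ω; simp
    | succ k ih =>
      intro ω
      have hstep : x (k + 1) ω - y (k + 1) ω
          = (x k ω - η • gradient f₀ (x k ω)) - (y k ω - η • gradient f₀ (y k ω)) := by
        rw [hx, hy]; abel
      calc ‖x (k + 1) ω - y (k + 1) ω‖
          = ‖(x k ω - η • gradient f₀ (x k ω)) - (y k ω - η • gradient f₀ (y k ω))‖ := by
            rw [hstep]
        _ ≤ (1 - η * μ) * ‖x k ω - y k ω‖ := hcontr _ _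
        _ ≤ (1 - η * μ) * ((1 - η * μ) ^ k * ‖x 0 ω - y 0 ω‖) :=
            mul_le_mul_of_nonneg_left (ih ω) hfac0
        _ = (1 - η * μ) ^ (k + 1) * ‖x 0 ω - y 0 ω‖ := by ring
  -- base integrability
  have hmeas0 : Measurable fun ω => ‖x 0 ω - y 0 ω‖ ^ 2 :=
    (((hxmeas 0).sub (hymeas 0)).norm).pow_const 2
  have hint0 : Integrable (fun ω => ‖x 0 ω - y 0 ω‖ ^ 2) P := by
    apply Integrable.mono' ((hx2.const_mul 2).add (hy2.const_mul 2))
      hmeas0.aestronglyMeasurable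
    filter_upwards with ω
    have h1 : ‖x 0 ω - y 0 ω‖ ≤ ‖x 0 ω‖ + ‖y 0 ω‖ := norm_sub_le _ _
    have h2 : ‖(fun ω => ‖x 0 ω - y 0 ω‖ ^ 2) ω‖ = ‖x 0 ω - y 0 ω‖ ^ 2 := by
      rw [Real.norm_eq_abs]; exact abs_of_nonneg (sq_nonneg _)
    rw [h2]
    simp only [Pi.add_apply]
    nlinarith [norm_nonneg (x 0 ω), norm_nonneg (y 0 ω), norm_nonneg (x 0 ω - y 0 ω),
      sq_nonneg (‖x 0 ω‖ - ‖y 0 ω‖)]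
  set I0 : ℝ := ∫ ω, ‖x 0 ω - y 0 ω‖ ^ 2 ∂P with hI0
  have hI0nn : 0 ≤ I0 := integral_nonneg fun ω => sq_nonneg _
  refine ⟨Real.sqrt I0, Real.sqrt_nonneg _, fun k => ?_⟩
  set c : ℝ := (1 - η * μ) ^ k with hc
  have hcnn : 0 ≤ c := pow_nonneg hfac0 k
  -- integral bound at step k
  have hintk : ∫ ω, ‖x k ω - y k ω‖ ^ 2 ∂P ≤ c ^ 2 * I0 := by
    have hg : Integrable (fun ω => c ^ 2 * ‖x 0 ω - y 0 ω‖ ^ 2) P := hint0.const_mul _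
    have hmono : (fun ω => ‖x k ω - y k ω‖ ^ 2) ≤ᵐ[P]
        fun ω => c ^ 2 * ‖x 0 ω - y 0 ω‖ ^ 2 := by
      filter_upwards with ω
      have := hpt k ω
      nlinarith [norm_nonneg (x k ω - y k ω), norm_nonneg (x 0 ω - y 0 ω)]
    calc ∫ ω, ‖x k ω - y k ω‖ ^ 2 ∂P
        ≤ ∫ ω, c ^ 2 * ‖x 0 ω - y 0 ω‖ ^ 2 ∂P :=
          integral_mono_of_nonneg (Filter.Eventually.of_forall fun ω => sq_nonneg _) hg hmono
      _ = c ^ 2 * I0 := by rw [integral_const_mul]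
  -- the coupling
  have hpm : Measurable fun ω => (x k ω, y k ω) := (hxmeas k).prodMk (hymeas k)
  set π : Measure (EuclideanSpace ℝ (Fin d) × EuclideanSpace ℝ (Fin d)) :=
    Measure.map (fun ω => (x k ω, y k ω)) P with hπ
  have h1 : π.map Prod.fst = Measure.map (x k) P := by
    rw [hπ, Measure.map_map measurable_fst hpm]; rfl
  have h2 : π.map Prod.snd = ρ_inf := by
    rw [hπ, Measure.map_map measurable_snd hpm]; exact hyinv k
  have hcont : Continuous fun p : EuclideanSpace ℝ (Fin d) × EuclideanSpace ℝ (Fin d) =>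
      ‖p.1 - p.2‖ ^ 2 := ((continuous_fst.sub continuous_snd).norm).pow 2
  have hmap_eq : ∫ p, ‖p.1 - p.2‖ ^ 2 ∂π = ∫ ω, ‖x k ω - y k ω‖ ^ 2 ∂P := by
    rw [hπ, integral_map hpm.aemeasurable hcont.aestronglyMeasurable]
  rw [W2]
  set S : Set ℝ := { r : ℝ |
    ∃ π : Measure (EuclideanSpace ℝ (Fin d) × EuclideanSpace ℝ (Fin d)),
      π.map Prod.fst = Measure.map (x k) P ∧ π.map Prod.snd = ρ_inf ∧
        r = ∫ p, ‖p.1 - p.2‖ ^ 2 ∂π } with hS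
  have hmem : (∫ p, ‖p.1 - p.2‖ ^ 2 ∂π) ∈ S := ⟨π, h1, h2, rfl⟩
  have hbdd : BddBelow S := by
    refine ⟨0, fun r hr => ?_⟩
    obtain ⟨π', -, -, rfl⟩ := hr
    exact integral_nonneg fun p => sq_nonneg _
  have hle1 : sInf S ≤ c ^ 2 * I0 := by
    calc sInf S ≤ ∫ p, ‖p.1 - p.2‖ ^ 2 ∂π := csInf_le hbdd hmem
      _ = ∫ ω, ‖x k ω - y k ω‖ ^ 2 ∂P := hmap_eq
      _ ≤ c ^ 2 * I0 := hintk
  calc Real.sqrt (sInf S) ≤ Real.sqrt (c ^ 2 * I0) := Real.sqrt_le_sqrt hle1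
    _ = c * Real.sqrt I0 := by
        rw [Real.sqrt_mul (sq_nonneg c), Real.sqrt_sq hcnn]
end

section
/- Let f₀ : ℝᵈ → ℝ be continuous with a unique global minimizer x₀, and suppose f₀(x) - f₀(x₀) ≥ C₁‖x - x₀‖^{k₁} and ‖∇f₀(x)‖ ≤ C₂‖x - x₀‖^{k₂} for all x, with constants C₁, C₂ > 0 and k₁, k₂ ≥ 1. If X follows the rescaled Gibbs distribution with density proportional to exp(-2f₀(x)/η), then E‖∇f₀(X)‖² = O(η^{(2k₂)/k₁}) as η → 0, i.e., there exist η₀ > 0 and K such that E‖∇f₀(X)‖² ≤ K·η^{2k₂/k₁} for all 0 < η < η₀. -/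
open MeasureTheory Real

lemma aux_norm_gradient {d : ℕ} (f : EuclideanSpace ℝ (Fin d) → ℝ) (x : EuclideanSpace ℝ (Fin d)) :
    ‖gradient f x‖ = ‖fderiv ℝ f x‖ :=
  LinearIsometryEquiv.norm_map _ _

lemma aux_pt_bound (b q k : ℝ) (hb : 0 < b) (hq : 0 ≤ q) (hk : 1 ≤ k) (d : ℕ) :
    ∃ M : ℝ, ∀ t : ℝ, 0 ≤ t →
      t ^ q * Real.exp (-b * t ^ k) ≤ M * (1 + t) ^ (-(d + 1 : ℝ)) := by
  set n : ℕ := ⌈q + d + 1⌉₊ with hn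
  refine ⟨Real.exp (2 * b) * ((Nat.factorial n : ℕ) : ℝ) / b ^ n, fun t ht => ?_⟩
  have hu0 : (0:ℝ) < 1 + t := by linarith
  have hu1 : (1:ℝ) ≤ 1 + t := by linarith
  have h1 : t ^ q ≤ (1 + t) ^ q := Real.rpow_le_rpow ht (by linarith) hq
  have h2 : t - 1 ≤ t ^ k := by
    rcases le_or_gt 1 t with h | h
    · calc t - 1 ≤ t := by linarith
        _ = t ^ (1:ℝ) := (Real.rpow_one t).symm
        _ ≤ t ^ k := Real.rpow_le_rpow_of_exponent_le h hk
    · have : (0:ℝ) ≤ t ^ k := Real.rpow_nonneg ht k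
      linarith
  have h3 : Real.exp (-b * t ^ k) ≤ Real.exp (2 * b) * Real.exp (-b * (1 + t)) := by
    rw [← Real.exp_add]
    apply Real.exp_le_exp.mpr
    nlinarith
  have h4 : (1 + t) ^ q * (1 + t) ^ (d + 1 : ℝ) = (1 + t) ^ (q + d + 1) := by
    rw [← Real.rpow_add hu0]; ring_nf
  have h5 : (1 + t) ^ (q + d + 1) ≤ (1 + t) ^ (n : ℝ) :=
    Real.rpow_le_rpow_of_exponent_le hu1 (Nat.le_ceil _)
  have h6 : (1 + t) ^ (n:ℝ) ≤ ((Nat.factorial n : ℕ) : ℝ) * Real.exp (b * (1 + t)) / b ^ n := by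
    have := Real.pow_div_factorial_le_exp (x := b * (1 + t)) (by positivity) n
    rw [div_le_iff₀ (by positivity)] at this
    rw [le_div_iff₀ (by positivity), Real.rpow_natCast]
    calc (1 + t) ^ n * b ^ n = (b * (1 + t)) ^ n := by rw [← mul_pow]; ring_nf
      _ ≤ Real.exp (b * (1 + t)) * ((Nat.factorial n : ℕ) : ℝ) := this
      _ = ((Nat.factorial n : ℕ) : ℝ) * Real.exp (b * (1 + t)) := by ring
  have key : t ^ q * Real.exp (-b * t ^ k) * (1 + t) ^ (d + 1 : ℝ) ≤
      Real.exp (2 * b) * ((Nat.factorial n : ℕ) : ℝ) / b ^ n := by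
    calc t ^ q * Real.exp (-b * t ^ k) * (1 + t) ^ (d + 1 : ℝ)
        ≤ (1 + t) ^ q * (Real.exp (2*b) * Real.exp (-b * (1+t))) * (1 + t) ^ (d + 1 : ℝ) := by
          apply mul_le_mul_of_nonneg_right _ (Real.rpow_nonneg hu0.le _)
          exact mul_le_mul h1 h3 (Real.exp_pos _).le (Real.rpow_nonneg hu0.le _)
      _ = (1 + t) ^ q * (1 + t) ^ (d + 1 : ℝ) * Real.exp (2*b) * Real.exp (-b * (1+t)) := by ring
      _ = (1 + t) ^ (q + d + 1) * Real.exp (2*b) * Real.exp (-b * (1+t)) := by rw [h4]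
      _ ≤ (1 + t) ^ (n:ℝ) * Real.exp (2*b) * Real.exp (-b * (1+t)) := by
          apply mul_le_mul_of_nonneg_right (mul_le_mul_of_nonneg_right h5 (Real.exp_pos _).le)
            (Real.exp_pos _).le
      _ ≤ (((Nat.factorial n : ℕ) : ℝ) * Real.exp (b * (1 + t)) / b ^ n) * Real.exp (2*b) * Real.exp (-b * (1+t)) := by
          apply mul_le_mul_of_nonneg_right (mul_le_mul_of_nonneg_right h6 (Real.exp_pos _).le)
            (Real.exp_pos _).le
      _ = Real.exp (2 * b) * ((Nat.factorial n : ℕ) : ℝ) / b ^ n * (Real.exp (b * (1+t)) * Real.exp (-b * (1+t))) := by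
          ring
      _ = Real.exp (2 * b) * ((Nat.factorial n : ℕ) : ℝ) / b ^ n := by
          rw [← Real.exp_add]; simp
  rw [Real.rpow_neg hu0.le, ← div_eq_mul_inv, le_div_iff₀ (by positivity)]
  exact key


lemma aux_cont_rpow {q : ℝ} (hq : 0 ≤ q) : Continuous fun t : ℝ => |t| ^ q := by
  rcases eq_or_lt_of_le hq with h | h
  · simpa [← h] using continuous_const
  · apply continuous_iff_continuousAt.mpr fun t => ?_
    exact (Real.continuousAt_rpow_const _ _ (Or.inr h.le)).comp (continuous_abs.continuousAt)

lemma aux_integrable (d : ℕ) (b q k : ℝ) (hb : 0 < b) (hq : 0 ≤ q) (hk : 1 ≤ k) :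
    Integrable (fun u : EuclideanSpace ℝ (Fin d) => ‖u‖ ^ q * Real.exp (-b * ‖u‖ ^ k)) := by
  obtain ⟨M, hM⟩ := aux_pt_bound b q k hb hq hk d
  have hfin : (Module.finrank ℝ (EuclideanSpace ℝ (Fin d)) : ℝ) < (d + 1 : ℝ) := by
    rw [finrank_euclideanSpace_fin]; linarith
  have hint : Integrable (fun u : EuclideanSpace ℝ (Fin d) => M * (1 + ‖u‖) ^ (-(d + 1 : ℝ))) :=
    (integrable_one_add_norm hfin).const_mul M
  have hcont : Continuous fun u : EuclideanSpace ℝ (Fin d) =>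
      ‖u‖ ^ q * Real.exp (-b * ‖u‖ ^ k) := by
    have c1 : Continuous fun u : EuclideanSpace ℝ (Fin d) => ‖u‖ ^ q := by
      have := (aux_cont_rpow hq).comp
        (continuous_norm : Continuous fun u : EuclideanSpace ℝ (Fin d) => ‖u‖)
      simpa [Function.comp_def, abs_of_nonneg (norm_nonneg _)] using this
    have c2 : Continuous fun u : EuclideanSpace ℝ (Fin d) => ‖u‖ ^ k := by
      have := (aux_cont_rpow (by linarith : (0:ℝ) ≤ k)).comp
        (continuous_norm : Continuous fun u : EuclideanSpace ℝ (Fin d) => ‖u‖)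
      simpa [Function.comp_def, abs_of_nonneg (norm_nonneg _)] using this
    exact c1.mul ((Real.continuous_exp).comp (continuous_const.mul c2))
  refine hint.mono' hcont.aestronglyMeasurable (ae_of_all _ fun u => ?_)
  have h := hM ‖u‖ (norm_nonneg u)
  rwa [Real.norm_eq_abs, abs_of_nonneg (by positivity)]


lemma aux_upper {d : ℕ} (f : EuclideanSpace ℝ (Fin d) → ℝ) (hf : ContDiff ℝ 1 f)
    (x₀ : EuclideanSpace ℝ (Fin d)) (C₂ k₂ : ℝ) (hC₂ : 0 ≤ C₂) (hk₂ : 0 ≤ k₂)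
    (hgrad : ∀ x, ‖gradient f x‖ ≤ C₂ * ‖x - x₀‖ ^ k₂) (x : EuclideanSpace ℝ (Fin d)) :
    f x - f x₀ ≤ C₂ * ‖x - x₀‖ ^ (k₂ + 1) := by
  rcases eq_or_ne x x₀ with rfl | hx
  · simp [Real.zero_rpow (by positivity : k₂ + 1 ≠ 0)]
  have hd : ∀ y, DifferentiableAt ℝ f y := fun y => (hf.differentiable one_ne_zero) y
  have key : ‖f x - f x₀‖ ≤ (C₂ * ‖x - x₀‖ ^ k₂) * ‖x - x₀‖ := by
    have hb : ∀ y ∈ Metric.closedBall x₀ ‖x - x₀‖, ‖fderiv ℝ f y‖ ≤ C₂ * ‖x - x₀‖ ^ k₂ := by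
      intro y hy
      rw [← aux_norm_gradient]
      refine (hgrad y).trans (mul_le_mul_of_nonneg_left ?_ hC₂)
      refine Real.rpow_le_rpow (norm_nonneg _) ?_ hk₂
      simpa [Metric.mem_closedBall, dist_eq_norm] using hy
    exact (convex_closedBall x₀ ‖x - x₀‖).norm_image_sub_le_of_norm_fderiv_le
      (fun y _ => hd y) hb (Metric.mem_closedBall_self (norm_nonneg _))
      (by simp [Metric.mem_closedBall, dist_eq_norm])
  have h2 : f x - f x₀ ≤ C₂ * ‖x - x₀‖ ^ k₂ * ‖x - x₀‖ :=
    (le_abs_self _).trans (by rwa [Real.norm_eq_abs] at key)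
  have hne : ‖x - x₀‖ ≠ 0 := by simpa [sub_eq_zero] using hx
  rw [Real.rpow_add_one hne] at *
  linarith [h2]

lemma aux_exp_cmp (d : ℕ) {f : EuclideanSpace ℝ (Fin d) → ℝ} {x₀ : EuclideanSpace ℝ (Fin d)}
    {C₁ C₂ k₁ k₂ : ℝ} (hC₁ : 0 < C₁) (hC₂ : 0 < C₂) (hk₁ : 1 ≤ k₁) (hk₂ : 1 ≤ k₂)
    (hgrowth : ∀ x, C₁ * ‖x - x₀‖ ^ k₁ ≤ f x - f x₀)
    (hupper : ∀ x, f x - f x₀ ≤ C₂ * ‖x - x₀‖ ^ (k₂ + 1)) :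
    2 * k₂ / k₁ ≤ (2 * k₂ + d) / k₁ - d / (k₂ + 1) := by
  have hk₁0 : (0:ℝ) < k₁ := by linarith
  have hk₂0 : (0:ℝ) < k₂ + 1 := by linarith
  rcases Nat.eq_zero_or_pos d with rfl | hd
  · simp
  -- show k₁ ≤ k₂ + 1
  have hle : k₁ ≤ k₂ + 1 := by
    by_contra h
    push_neg at h
    set δ : ℝ := k₁ - (k₂ + 1) with hδ
    have hδ0 : 0 < δ := by simp only [hδ]; linarith
    set r : ℝ := (2 * C₂ / C₁) ^ (1 / δ) with hr
    have hr0 : 0 < r := Real.rpow_pos_of_pos (by positivity) _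
    have hrδ : r ^ δ = 2 * C₂ / C₁ := by
      rw [hr, ← Real.rpow_mul (by positivity), one_div_mul_cancel hδ0.ne', Real.rpow_one]
    set e := EuclideanSpace.single (⟨0, hd⟩ : Fin d) (1:ℝ) with he
    set x := x₀ + r • e with hx
    have hnorm : ‖x - x₀‖ = r := by
      rw [hx, add_sub_cancel_left, norm_smul, he, EuclideanSpace.norm_single]
      simp [abs_of_pos hr0]
    have h1 := hgrowth x
    have h2 := hupper x
    rw [hnorm] at h1 h2
    have hsplit : r ^ k₁ = r ^ (k₂ + 1) * r ^ δ := by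
      rw [← Real.rpow_add hr0]
      congr 1
      simp only [hδ]; ring
    rw [hsplit, hrδ] at h1
    have hpos : 0 < r ^ (k₂ + 1) := Real.rpow_pos_of_pos hr0 _
    have hC₁ne : C₁ ≠ 0 := hC₁.ne'
    have : C₁ * (r ^ (k₂ + 1) * (2 * C₂ / C₁)) = 2 * C₂ * r ^ (k₂ + 1) := by
      field_simp
    rw [this] at h1
    nlinarith [mul_pos hC₂ hpos]
  have h1 : (d:ℝ) / (k₂ + 1) ≤ (d:ℝ) / k₁ :=
    div_le_div_of_nonneg_left (by positivity) hk₁0 hle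
  have h2 : (2 * k₂ + d) / k₁ = 2 * k₂ / k₁ + d / k₁ := by ring
  linarith


lemma aux_scaling (d : ℕ) (q k η b : ℝ) (hq : 0 ≤ q) (hk : 1 ≤ k) (hη : 0 < η) :
    ∫ u : EuclideanSpace ℝ (Fin d), ‖u‖ ^ q * Real.exp (-b * ‖u‖ ^ k / η)
      = η ^ ((q + d) / k) *
        ∫ y : EuclideanSpace ℝ (Fin d), ‖y‖ ^ q * Real.exp (-b * ‖y‖ ^ k) := by
  have hk0 : (0:ℝ) < k := by linarith
  set c : ℝ := η ^ (1 / k) with hc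
  have hc0 : 0 < c := Real.rpow_pos_of_pos hη _
  have hck : c ^ k = η := by
    rw [hc, ← Real.rpow_mul hη.le, one_div_mul_cancel hk0.ne', Real.rpow_one]
  have hsmul := MeasureTheory.Measure.integral_comp_smul (volume : Measure (EuclideanSpace ℝ (Fin d)))
    (fun u => ‖u‖ ^ q * Real.exp (-b * ‖u‖ ^ k / η)) c
  rw [finrank_euclideanSpace_fin] at hsmul
  have heval : ∀ x : EuclideanSpace ℝ (Fin d),
      ‖c • x‖ ^ q * Real.exp (-b * ‖c • x‖ ^ k / η)
        = c ^ q * (‖x‖ ^ q * Real.exp (-b * ‖x‖ ^ k)) := by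
    intro x
    have hnorm : ‖c • x‖ = c * ‖x‖ := by rw [norm_smul, Real.norm_eq_abs, abs_of_pos hc0]
    rw [hnorm, Real.mul_rpow hc0.le (norm_nonneg _), Real.mul_rpow hc0.le (norm_nonneg _), hck]
    rw [show -b * (η * ‖x‖ ^ k) / η = -b * ‖x‖ ^ k by field_simp]
    ring
  simp only [heval] at hsmul
  rw [MeasureTheory.integral_const_mul] at hsmul
  have habs : |((c ^ d : ℝ))⁻¹| = (c ^ d)⁻¹ := abs_of_pos (by positivity)
  rw [habs, smul_eq_mul] at hsmul
  have : ∫ u : EuclideanSpace ℝ (Fin d), ‖u‖ ^ q * Real.exp (-b * ‖u‖ ^ k / η)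
      = c ^ d * (c ^ q * ∫ y : EuclideanSpace ℝ (Fin d), ‖y‖ ^ q * Real.exp (-b * ‖y‖ ^ k)) := by
    rw [hsmul, ← mul_assoc, mul_inv_cancel₀ (by positivity : (c:ℝ) ^ d ≠ 0), one_mul]
  rw [this, ← mul_assoc]
  congr 1
  rw [hc, ← Real.rpow_natCast (η ^ (1/k)) d, ← Real.rpow_mul hη.le, ← Real.rpow_mul hη.le,
    ← Real.rpow_add hη]
  congr 1
  field_simp
  ring


lemma aux_denom (d : ℕ) (f : EuclideanSpace ℝ (Fin d) → ℝ) (x₀ : EuclideanSpace ℝ (Fin d))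
    (C₂ k₂ η : ℝ) (hC₂ : 0 < C₂) (hk₂ : 1 ≤ k₂) (hη : 0 < η) (hη1 : η ≤ 1)
    (hupper : ∀ x, f x - f x₀ ≤ C₂ * ‖x - x₀‖ ^ (k₂ + 1))
    (hint : Integrable (fun x => Real.exp (-2 * f x / η))) :
    Real.exp (-2 * f x₀ / η) * Real.exp (-2 * C₂) *
        (η ^ ((d : ℝ) / (k₂ + 1)) *
          (volume (Metric.closedBall (0 : EuclideanSpace ℝ (Fin d)) 1)).toReal)
      ≤ ∫ x, Real.exp (-2 * f x / η) := by
  have hk0 : (0:ℝ) < k₂ + 1 := by linarith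
  set ρ : ℝ := η ^ (1 / (k₂ + 1)) with hρ
  have hρ0 : 0 < ρ := Real.rpow_pos_of_pos hη _
  have hρk : ρ ^ (k₂ + 1) = η := by
    rw [hρ, ← Real.rpow_mul hη.le, one_div_mul_cancel hk0.ne', Real.rpow_one]
  have hpt : ∀ x ∈ Metric.closedBall x₀ ρ,
      Real.exp (-2 * f x₀ / η) * Real.exp (-2 * C₂) ≤ Real.exp (-2 * f x / η) := by
    intro x hx
    have h1 : ‖x - x₀‖ ≤ ρ := by simpa [Metric.mem_closedBall, dist_eq_norm] using hx
    have h2 : f x ≤ f x₀ + C₂ * η := by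
      have h3 : ‖x - x₀‖ ^ (k₂ + 1) ≤ ρ ^ (k₂ + 1) :=
        Real.rpow_le_rpow (norm_nonneg _) h1 hk0.le
      have := hupper x
      rw [hρk] at h3
      nlinarith
    rw [← Real.exp_add]
    apply Real.exp_le_exp.mpr
    have heq : -2 * f x / η - (-2 * f x₀ / η + -2 * C₂) = 2 * (f x₀ + C₂ * η - f x) / η := by
      field_simp; ring
    have hge : 0 ≤ 2 * (f x₀ + C₂ * η - f x) / η := div_nonneg (by linarith) hη.le
    linarith [heq ▸ hge]
  have hball := setIntegral_ge_of_const_le (μ := volume) measurableSet_closedBall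
    (measure_closedBall_lt_top).ne hpt hint.integrableOn
  have hvol : (volume (Metric.closedBall x₀ ρ)).toReal
      = η ^ ((d : ℝ) / (k₂ + 1)) *
        (volume (Metric.closedBall (0 : EuclideanSpace ℝ (Fin d)) 1)).toReal := by
    rw [Measure.addHaar_closedBall' volume x₀ hρ0.le, finrank_euclideanSpace_fin,
      ENNReal.toReal_mul, ENNReal.toReal_ofReal (by positivity)]
    congr 1
    rw [hρ, ← Real.rpow_natCast (η ^ (1 / (k₂ + 1))) d, ← Real.rpow_mul hη.le]
    congr 1
    ring
  calc Real.exp (-2 * f x₀ / η) * Real.exp (-2 * C₂) *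
        (η ^ ((d : ℝ) / (k₂ + 1)) *
          (volume (Metric.closedBall (0 : EuclideanSpace ℝ (Fin d)) 1)).toReal)
      = Real.exp (-2 * f x₀ / η) * Real.exp (-2 * C₂) *
          (volume (Metric.closedBall x₀ ρ)).toReal := by rw [hvol]
    _ ≤ ∫ x in Metric.closedBall x₀ ρ, Real.exp (-2 * f x / η) := by
        have h := hball; rw [smul_eq_mul, mul_comm (volume.real _)] at h; exact h
    _ ≤ ∫ x, Real.exp (-2 * f x / η) :=
        setIntegral_le_integral hint (ae_of_all _ fun x => (Real.exp_pos _).le)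


lemma aux_num (d : ℕ) (f : EuclideanSpace ℝ (Fin d) → ℝ) (x₀ : EuclideanSpace ℝ (Fin d))
    (C₁ C₂ k₁ k₂ η : ℝ) (hC₁ : 0 < C₁) (hC₂ : 0 < C₂) (hk₁ : 1 ≤ k₁) (hk₂ : 1 ≤ k₂)
    (hη : 0 < η)
    (hgrowth : ∀ x, C₁ * ‖x - x₀‖ ^ k₁ ≤ f x - f x₀)
    (hgrad : ∀ x, ‖gradient f x‖ ≤ C₂ * ‖x - x₀‖ ^ k₂)
    (hint2 : Integrable (fun x => ‖gradient f x‖ ^ 2 * Real.exp (-2 * f x / η))) :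
    (∫ x, ‖gradient f x‖ ^ 2 * Real.exp (-2 * f x / η))
      ≤ C₂ ^ 2 * Real.exp (-2 * f x₀ / η) *
        (η ^ ((2 * k₂ + d) / k₁) *
          ∫ y : EuclideanSpace ℝ (Fin d), ‖y‖ ^ (2 * k₂) * Real.exp (-(2 * C₁) * ‖y‖ ^ k₁)) := by
  set g : EuclideanSpace ℝ (Fin d) → ℝ :=
    fun u => ‖u‖ ^ (2 * k₂) * Real.exp (-(2 * C₁) * ‖u‖ ^ k₁ / η) with hg
  have hgint : Integrable g := by
    have := aux_integrable d (2 * C₁ / η) (2 * k₂) k₁ (by positivity) (by linarith) hk₁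
    have heq : ∀ u : EuclideanSpace ℝ (Fin d),
        ‖u‖ ^ (2 * k₂) * Real.exp (-(2 * C₁ / η) * ‖u‖ ^ k₁) = g u := by
      intro u; rw [hg]; congr 2; ring
    simpa only [heq] using this
  have hpt : ∀ x, ‖gradient f x‖ ^ 2 * Real.exp (-2 * f x / η)
      ≤ C₂ ^ 2 * Real.exp (-2 * f x₀ / η) * g (x - x₀) := by
    intro x
    have ht0 : (0:ℝ) ≤ ‖x - x₀‖ := norm_nonneg _
    have h1 : ‖gradient f x‖ ^ 2 ≤ C₂ ^ 2 * ‖x - x₀‖ ^ (2 * k₂) := by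
      have hsq : (C₂ * ‖x - x₀‖ ^ k₂) ^ 2 = C₂ ^ 2 * ‖x - x₀‖ ^ (2 * k₂) := by
        rw [mul_pow, ← Real.rpow_natCast (‖x - x₀‖ ^ k₂) 2, ← Real.rpow_mul ht0]
        norm_num
        left
        rw [mul_comm]
      calc ‖gradient f x‖ ^ 2 ≤ (C₂ * ‖x - x₀‖ ^ k₂) ^ 2 :=
            pow_le_pow_left₀ (norm_nonneg _) (hgrad x) 2
        _ = C₂ ^ 2 * ‖x - x₀‖ ^ (2 * k₂) := hsq
    have h2 : Real.exp (-2 * f x / η)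
        ≤ Real.exp (-2 * f x₀ / η) * Real.exp (-(2 * C₁) * ‖x - x₀‖ ^ k₁ / η) := by
      rw [← Real.exp_add, ← add_div]
      apply Real.exp_le_exp.mpr
      apply (div_le_div_iff_of_pos_right hη).mpr
      linarith [hgrowth x]
    calc ‖gradient f x‖ ^ 2 * Real.exp (-2 * f x / η)
        ≤ (C₂ ^ 2 * ‖x - x₀‖ ^ (2 * k₂)) *
            (Real.exp (-2 * f x₀ / η) * Real.exp (-(2 * C₁) * ‖x - x₀‖ ^ k₁ / η)) :=
          mul_le_mul h1 h2 (Real.exp_pos _).le (by positivity)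
      _ = C₂ ^ 2 * Real.exp (-2 * f x₀ / η) * g (x - x₀) := by simp only [hg]; ring
  calc (∫ x, ‖gradient f x‖ ^ 2 * Real.exp (-2 * f x / η))
      ≤ ∫ x, C₂ ^ 2 * Real.exp (-2 * f x₀ / η) * g (x - x₀) :=
        integral_mono hint2 ((hgint.comp_sub_right x₀).const_mul _) hpt
    _ = C₂ ^ 2 * Real.exp (-2 * f x₀ / η) * ∫ x, g (x - x₀) :=
        MeasureTheory.integral_const_mul _ _
    _ = C₂ ^ 2 * Real.exp (-2 * f x₀ / η) *
        (η ^ ((2 * k₂ + d) / k₁) *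
          ∫ y : EuclideanSpace ℝ (Fin d), ‖y‖ ^ (2 * k₂) * Real.exp (-(2 * C₁) * ‖y‖ ^ k₁)) := by
        rw [integral_sub_right_eq_self g x₀]
        rw [hg]
        exact congrArg _ (aux_scaling d (2 * k₂) k₁ η (2 * C₁) (by linarith) hk₁ hη)

/-- under the growth bounds `f₀(x)-f₀(x₀) ≥ C₁‖x-x₀‖^{k₁}` and
`‖∇f₀(x)‖ ≤ C₂‖x-x₀‖^{k₂}`, if `X` follows the rescaled Gibbs law with density
`∝ exp(-2f₀/η)`, then `E‖∇f₀(X)‖² = O(η^{2k₂/k₁})` as `η → 0`. -/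
theorem stmt_3 (d : ℕ) (f₀ : EuclideanSpace ℝ (Fin d) → ℝ)
    (hC1f : ContDiff ℝ 1 f₀)
    (x₀ : EuclideanSpace ℝ (Fin d))
    (hmin : ∀ x, f₀ x₀ ≤ f₀ x)
    (huniq : ∀ x, f₀ x = f₀ x₀ → x = x₀)
    (C₁ C₂ k₁ k₂ : ℝ) (hC₁ : 0 < C₁) (hC₂ : 0 < C₂) (hk₁ : 1 ≤ k₁) (hk₂ : 1 ≤ k₂)
    (hgrowth : ∀ x, C₁ * ‖x - x₀‖ ^ k₁ ≤ f₀ x - f₀ x₀)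
    (hgrad : ∀ x, ‖gradient f₀ x‖ ≤ C₂ * ‖x - x₀‖ ^ k₂)
    (hint : ∀ η : ℝ, 0 < η → Integrable (fun x => Real.exp (-2 * f₀ x / η)) volume)
    (hint2 : ∀ η : ℝ, 0 < η →
      Integrable (fun x => ‖gradient f₀ x‖ ^ 2 * Real.exp (-2 * f₀ x / η)) volume) :
    ∃ η₀ > 0, ∃ K : ℝ, ∀ η : ℝ, 0 < η → η < η₀ →
      (∫ x, ‖gradient f₀ x‖ ^ 2 * Real.exp (-2 * f₀ x / η)) /
        (∫ x, Real.exp (-2 * f₀ x / η)) ≤ K * η ^ (2 * k₂ / k₁) := by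
  set A : ℝ := ∫ y : EuclideanSpace ℝ (Fin d), ‖y‖ ^ (2 * k₂) * Real.exp (-(2 * C₁) * ‖y‖ ^ k₁)
    with hA
  set V : ℝ := (volume (Metric.closedBall (0 : EuclideanSpace ℝ (Fin d)) 1)).toReal with hV
  have hA0 : 0 ≤ A := integral_nonneg fun y => by positivity
  have hV0 : 0 < V := by
    rw [hV]
    exact ENNReal.toReal_pos (Metric.measure_closedBall_pos volume _ one_pos).ne'
      measure_closedBall_lt_top.ne
  have hupper := aux_upper f₀ hC1f x₀ C₂ k₂ hC₂.le (by linarith) hgrad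
  have hexp := aux_exp_cmp d hC₁ hC₂ hk₁ hk₂ hgrowth hupper
  refine ⟨1, one_pos, C₂ ^ 2 * A * Real.exp (2 * C₂) / V, fun η hη hη1 => ?_⟩
  set K : ℝ := C₂ ^ 2 * A * Real.exp (2 * C₂) / V with hK
  set p₁ : ℝ := (2 * k₂ + d) / k₁ with hp₁
  set p₂ : ℝ := (d : ℝ) / (k₂ + 1) with hp₂
  set N : ℝ := C₂ ^ 2 * Real.exp (-2 * f₀ x₀ / η) * (η ^ p₁ * A) with hN
  set D : ℝ := Real.exp (-2 * f₀ x₀ / η) * Real.exp (-2 * C₂) * (η ^ p₂ * V) with hD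
  have hnum : (∫ x, ‖gradient f₀ x‖ ^ 2 * Real.exp (-2 * f₀ x / η)) ≤ N :=
    aux_num d f₀ x₀ C₁ C₂ k₁ k₂ η hC₁ hC₂ hk₁ hk₂ hη hgrowth hgrad (hint2 η hη)
  have hden : D ≤ ∫ x, Real.exp (-2 * f₀ x / η) :=
    aux_denom d f₀ x₀ C₂ k₂ η hC₂ hk₂ hη hη1.le hupper (hint η hη)
  have hD0 : 0 < D := by
    rw [hD]
    have := Real.rpow_pos_of_pos hη p₂
    positivity
  have hN0 : 0 ≤ N := by
    rw [hN]
    have := (Real.rpow_pos_of_pos hη p₁).le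
    positivity
  have hdiv : (∫ x, ‖gradient f₀ x‖ ^ 2 * Real.exp (-2 * f₀ x / η)) /
      (∫ x, Real.exp (-2 * f₀ x / η)) ≤ N / D :=
    div_le_div₀ hN0 hnum hD0 hden
  have hND : N / D = K * η ^ (p₁ - p₂) := by
    have h1 : η ^ p₁ = η ^ (p₁ - p₂) * η ^ p₂ := by
      rw [← Real.rpow_add hη, sub_add_cancel]
    have hE : Real.exp (-2 * f₀ x₀ / η) ≠ 0 := Real.exp_ne_zero _
    have he2 : Real.exp (-2 * C₂) = (Real.exp (2 * C₂))⁻¹ := by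
      rw [neg_mul, Real.exp_neg]
    have hp2 : (0:ℝ) < η ^ p₂ := Real.rpow_pos_of_pos hη _
    rw [hN, hD, h1, hK, he2]
    field_simp
  have hfin : K * η ^ (p₁ - p₂) ≤ K * η ^ (2 * k₂ / k₁) := by
    have hK0 : 0 ≤ K := by rw [hK]; positivity
    apply mul_le_mul_of_nonneg_left _ hK0
    apply Real.rpow_le_rpow_of_exponent_ge hη hη1.le
    rw [hp₁, hp₂] at *
    linarith [hexp]
  calc (∫ x, ‖gradient f₀ x‖ ^ 2 * Real.exp (-2 * f₀ x / η)) /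
        (∫ x, Real.exp (-2 * f₀ x / η)) ≤ N / D := hdiv
    _ = K * η ^ (p₁ - p₂) := hND
    _ ≤ K * η ^ (2 * k₂ / k₁) := hfin
end

section
/- Let φ : J → J be a continuous map of a compact interval J ⊂ ℝ. If there exists a ∈ J such that, setting b = φ(a), c = φ(b), d = φ(c), either d ≤ a < b < c or d ≥ a > b > c holds, then φ has a periodic point of period 3. -/
open Set

/-- Covering lemma (orientation-reversing case): if `f` is continuous on `[α,β]`,
`v ≤ f α` and `f β ≤ u` with `u ≤ v`, then there is a subinterval `[α',β']` on which
`f` maps into `[u,v]` with `f α' = v` and `f β' = u`. -/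
lemma cover_mono (f : ℝ → ℝ) (α β u v : ℝ) (hαβ : α ≤ β) (huv : u ≤ v)
    (hc : ContinuousOn f (Icc α β)) (hfa : f α ≤ u) (hfb : v ≤ f β) :
    ∃ α' β', α ≤ α' ∧ α' ≤ β' ∧ β' ≤ β ∧ f α' = u ∧ f β' = v ∧
      MapsTo f (Icc α' β') (Icc u v) := by
  -- the set of points of [α,β] where f = v
  set S : Set ℝ := Icc α β ∩ f ⁻¹' {v} with hS
  have hSclosed : IsClosed S :=
    hc.preimage_isClosed_of_isClosed isClosed_Icc isClosed_singleton
  have hSne : S.Nonempty := by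
    have : v ∈ Icc (f α) (f β) := ⟨hfa.trans huv, hfb⟩
    obtain ⟨x, hx, hfx⟩ := intermediate_value_Icc hαβ hc this
    exact ⟨x, hx, hfx⟩
  have hSbdd : BddBelow S := ⟨α, fun x hx => hx.1.1⟩
  set β' := sInf S with hβ'
  have hβ'S : β' ∈ S := hSclosed.csInf_mem hSne hSbdd
  have hβ'mem : β' ∈ Icc α β := hβ'S.1
  have hfβ' : f β' = v := hβ'S.2
  -- the set of points of [α,β'] where f = u
  set T : Set ℝ := Icc α β' ∩ f ⁻¹' {u} with hT
  have hc' : ContinuousOn f (Icc α β') := hc.mono (Icc_subset_Icc le_rfl hβ'mem.2)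
  have hTclosed : IsClosed T :=
    hc'.preimage_isClosed_of_isClosed isClosed_Icc isClosed_singleton
  have hTne : T.Nonempty := by
    have : u ∈ Icc (f α) (f β') := ⟨hfa, by rw [hfβ']; exact huv⟩
    obtain ⟨x, hx, hfx⟩ := intermediate_value_Icc hβ'mem.1 hc' this
    exact ⟨x, hx, hfx⟩
  have hTbdd : BddAbove T := ⟨β', fun x hx => hx.1.2⟩
  set α' := sSup T with hα'
  have hα'T : α' ∈ T := hTclosed.csSup_mem hTne hTbdd
  have hα'mem : α' ∈ Icc α β' := hα'T.1
  have hfα' : f α' = u := hα'T.2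
  refine ⟨α', β', hα'mem.1, hα'mem.2, hβ'mem.2, hfα', hfβ', ?_⟩
  intro x hx
  have hxab : x ∈ Icc α β := ⟨hα'mem.1.trans hx.1, hx.2.trans hβ'mem.2⟩
  have hcx : ContinuousOn f (Icc x β') :=
    hc.mono (Icc_subset_Icc hxab.1 hβ'mem.2)
  constructor
  · -- u ≤ f x
    by_contra h
    push_neg at h
    have : u ∈ Icc (f x) (f β') := ⟨h.le, by rw [hfβ']; exact huv⟩
    obtain ⟨y, hy, hfy⟩ := intermediate_value_Icc hx.2 hcx this
    have hyT : y ∈ T := ⟨⟨hxab.1.trans hy.1, hy.2⟩, hfy⟩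
    have : y ≤ α' := le_csSup hTbdd hyT
    have hyx : y = x := le_antisymm (this.trans hx.1) hy.1
    rw [hyx] at hfy
    exact absurd hfy (by linarith)
  · -- f x ≤ v
    by_contra h
    push_neg at h
    have : v ∈ Icc (f α') (f x) := ⟨by rw [hfα']; exact huv, h.le⟩
    obtain ⟨y, hy, hfy⟩ := intermediate_value_Icc hx.1
      (hc.mono (Icc_subset_Icc hα'mem.1 hxab.2)) this
    have hyS : y ∈ S := ⟨⟨hα'mem.1.trans hy.1, hy.2.trans hxab.2⟩, hfy⟩
    have : β' ≤ y := csInf_le hSbdd hyS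
    have hyx : y = x := le_antisymm hy.2 (hx.2.trans this)
    rw [hyx] at hfy
    exact absurd hfy (by linarith)

/-- Covering lemma, orientation-reversing version. -/
lemma cover_anti (f : ℝ → ℝ) (α β u v : ℝ) (hαβ : α ≤ β) (huv : u ≤ v)
    (hc : ContinuousOn f (Icc α β)) (hfa : v ≤ f α) (hfb : f β ≤ u) :
    ∃ α' β', α ≤ α' ∧ α' ≤ β' ∧ β' ≤ β ∧ f α' = v ∧ f β' = u ∧
      MapsTo f (Icc α' β') (Icc u v) := by
  obtain ⟨α', β', h1, h2, h3, h4, h5, h6⟩ :=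
    cover_mono (fun x => -f x) α β (-v) (-u) hαβ (by linarith) hc.neg
      (by simpa using hfa) (by simpa using hfb)
  refine ⟨α', β', h1, h2, h3, by linarith [neg_eq_iff_eq_neg.mp h4], by
    simpa using neg_eq_iff_eq_neg.mp h5, fun x hx => ?_⟩
  obtain ⟨hl, hr⟩ := h6 hx
  simp only at hl hr
  exact ⟨by linarith, by linarith⟩

/-- The orientation-1 case of statement 6. -/
lemma stmt_6_aux (lo hi : ℝ) (hle : lo ≤ hi) (φ : ℝ → ℝ)
    (hcont : ContinuousOn φ (Icc lo hi))
    (hmaps : MapsTo φ (Icc lo hi) (Icc lo hi))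
    (a : ℝ) (ha : a ∈ Icc lo hi)
    (hpattern : φ (φ (φ a)) ≤ a ∧ a < φ a ∧ φ a < φ (φ a)) :
    ∃ x ∈ Icc lo hi, φ (φ (φ x)) = x ∧ φ x ≠ x := by
  obtain ⟨hda, hab, hbc⟩ := hpattern
  set b := φ a with hb
  set c := φ b with hcdef
  have hbmem : b ∈ Icc lo hi := hmaps ha
  have hcmem : c ∈ Icc lo hi := hmaps hbmem
  have hbcsub : Icc b c ⊆ Icc lo hi := Icc_subset_Icc hbmem.1 hcmem.2
  have habsub : Icc a b ⊆ Icc lo hi := Icc_subset_Icc ha.1 hbmem.2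
  have hcbc : ContinuousOn φ (Icc b c) := hcont.mono hbcsub
  -- Step 1: [α1,β1] ⊆ [b,c], φ α1 = c, φ β1 = b, φ maps [α1,β1] into [b,c]
  obtain ⟨α1, β1, h11, h12, h13, h14, h15, h16⟩ :=
    cover_anti φ b c b c hbc.le hbc.le hcbc le_rfl (by
      show φ c ≤ b; linarith)
  -- Step 2: [γ,δ] ⊆ [b,c], φ γ = b, φ δ = a, φ maps [γ,δ] into [a,b]
  obtain ⟨γ, δ, h21, h22, h23, h24, h25, h26⟩ :=
    cover_anti φ b c a b hbc.le hab.le hcbc (by show b ≤ φ b; linarith) (by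
      show φ c ≤ a; linarith)
  -- Step 3: [α2,β2] ⊆ [α1,β1], φ α2 = δ, φ β2 = γ, φ maps [α2,β2] into [γ,δ]
  obtain ⟨α2, β2, h31, h32, h33, h34, h35, h36⟩ :=
    cover_anti φ α1 β1 γ δ h12 h22
      (hcont.mono ((Icc_subset_Icc h11 h13).trans hbcsub))
      (by rw [h14]; exact h23) (by rw [h15]; exact h21)
  have hsub2 : Icc α2 β2 ⊆ Icc α1 β1 := Icc_subset_Icc h31 h33
  have hsub1 : Icc α1 β1 ⊆ Icc b c := Icc_subset_Icc h11 h13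
  have hγδsub : Icc γ δ ⊆ Icc b c := Icc_subset_Icc h21 h23
  -- φ³ on [α2,β2] is continuous
  have hmaps2 : MapsTo φ (Icc α2 β2) (Icc γ δ) := h36
  have hmaps3 : MapsTo (fun x => φ (φ x)) (Icc α2 β2) (Icc a b) :=
    fun x hx => h26 (hmaps2 hx)
  have hcφ2 : ContinuousOn (fun x => φ (φ x)) (Icc α2 β2) :=
    ContinuousOn.comp (hcont.mono (hγδsub.trans hbcsub))
      (hcont.mono ((hsub2.trans hsub1).trans hbcsub)) hmaps2
  have hcφ3 : ContinuousOn (fun x => φ (φ (φ x))) (Icc α2 β2) :=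
    ContinuousOn.comp (hcont.mono habsub) hcφ2 hmaps3
  -- endpoint values of φ³
  have e1 : φ (φ (φ α2)) = b := by rw [h34, h25, hb]
  have e2 : φ (φ (φ β2)) = c := by rw [h35, h24, hcdef]
  -- fixed point of φ³ by IVT on g x = φ³ x - x
  have hα2bc : α2 ∈ Icc b c := hsub1 (hsub2 ⟨le_rfl, h32⟩)
  have hβ2bc : β2 ∈ Icc b c := hsub1 (hsub2 ⟨h32, le_rfl⟩)
  have hgc : ContinuousOn (fun x => φ (φ (φ x)) - x) (Icc α2 β2) :=
    hcφ3.sub continuousOn_id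
  have h0 : (0 : ℝ) ∈ Icc (φ (φ (φ α2)) - α2) (φ (φ (φ β2)) - β2) := by
    rw [e1, e2]
    exact ⟨by linarith [hα2bc.1], by linarith [hβ2bc.2]⟩
  obtain ⟨x, hx, hfx⟩ := intermediate_value_Icc h32 hgc h0
  have hfix : φ (φ (φ x)) = x := by linarith [sub_eq_zero.mp hfx]
  have hxbc : x ∈ Icc b c := hsub1 (hsub2 hx)
  refine ⟨x, hbcsub hxbc, hfix, fun hφx => ?_⟩
  -- if φ x = x then φ² x = x ∈ [a,b] ∩ [b,c], so x = b, but φ b = c ≠ b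
  have hφ2x : φ (φ x) = x := by rw [hφx, hφx]
  have hxab : x ∈ Icc a b := hφ2x ▸ hmaps3 hx
  have hxb : x = b := le_antisymm hxab.2 hxbc.1
  rw [hxb] at hφx
  exact absurd hφx (by linarith)

/-- ("period 3" step of Li–Yorke) If a continuous self-map `φ` of a compact
interval `J = [lo, hi]` admits a point `a` with `b = φ a`, `c = φ b`, `d = φ c` satisfying
`d ≤ a < b < c` or `d ≥ a > b > c`, then `φ` has a periodic point of period 3. -/
theorem stmt_6 (lo hi : ℝ) (hle : lo ≤ hi) (φ : ℝ → ℝ)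
    (hcont : ContinuousOn φ (Icc lo hi))
    (hmaps : MapsTo φ (Icc lo hi) (Icc lo hi))
    (a : ℝ) (ha : a ∈ Icc lo hi)
    (hpattern :
      (φ (φ (φ a)) ≤ a ∧ a < φ a ∧ φ a < φ (φ a)) ∨
      (a ≤ φ (φ (φ a)) ∧ φ (φ a) < φ a ∧ φ a < a)) :
    ∃ x ∈ Icc lo hi, φ (φ (φ x)) = x ∧ φ x ≠ x := by
  rcases hpattern with h | h
  · exact stmt_6_aux lo hi hle φ hcont hmaps a ha h
  · -- reduce to the first case by reflecting: ψ x = -φ (-x) on [-hi, -lo]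
    set ψ : ℝ → ℝ := fun x => -φ (-x) with hψ
    have hneg : ∀ x : ℝ, x ∈ Icc (-hi) (-lo) ↔ -x ∈ Icc lo hi := by
      intro x; constructor <;> rintro ⟨h1, h2⟩ <;> constructor <;> linarith
    have hcont' : ContinuousOn ψ (Icc (-hi) (-lo)) := by
      apply ContinuousOn.neg
      exact hcont.comp continuousOn_neg (fun x hx => (hneg x).mp hx)
    have hmaps' : MapsTo ψ (Icc (-hi) (-lo)) (Icc (-hi) (-lo)) := by
      intro x hx
      have := hmaps ((hneg x).mp hx)
      exact ⟨by simp only [hψ]; linarith [this.2], by simp only [hψ]; linarith [this.1]⟩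
    have hψ3 : ∀ x : ℝ, ψ (ψ (ψ x)) = -φ (φ (φ (-x))) := by
      intro x; simp [hψ]
    obtain ⟨x, hx, hfix, hne⟩ := stmt_6_aux (-hi) (-lo) (by linarith) ψ hcont' hmaps'
      (-a) ((hneg (-a)).mpr (by simpa using ha))
      ⟨by rw [hψ3]; simp; linarith [h.1], by simp [hψ]; linarith [h.2.2],
        by simp [hψ]; linarith [h.2.1]⟩
    refine ⟨-x, (hneg x).mp hx, ?_, ?_⟩
    · have := hψ3 x
      rw [hfix] at this
      simpa using congrArg Neg.neg this.symm
    · intro hc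
      apply hne
      simp [hψ, hc]
end

section
/- Let f : ℝ → ℝ be C¹ with f' L-Lipschitz-bounded in the sense that |f'(x)| ≤ R + L|x| for some R, L ≥ 0, and suppose f'(x) → +∞ as x → +∞ and f'(x) → -∞ as x → -∞. Then for any 0 < η < 1/L there exists a compact interval J ⊂ ℝ such that the gradient descent map φ(x) = x - ηf'(x) satisfies φ(J) ⊆ J. -/
open Set Filter

/-- for `f : ℝ → ℝ` C¹ with `|f'(x)| ≤ R + L|x|`, `f'(x) → ±∞` as `x → ±∞`,
and any step `0 < η < 1/L`, the gradient descent map `φ(x) = x - η f'(x)` leaves some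
compact interval invariant. -/
theorem stmt_7 (f : ℝ → ℝ) (R L : ℝ) (hR : 0 ≤ R) (hL : 0 ≤ L)
    (hC1 : ContDiff ℝ 1 f)
    (hbnd : ∀ x, |deriv f x| ≤ R + L * |x|)
    (htop : Tendsto (deriv f) atTop atTop)
    (hbot : Tendsto (deriv f) atBot atBot)
    (η : ℝ) (hη0 : 0 < η) (hη1 : η < 1 / L) :
    ∃ a b : ℝ, a ≤ b ∧ MapsTo (fun x => x - η * deriv f x) (Icc a b) (Icc a b) := by
  rcases eq_or_lt_of_le hL with hL0 | hLpos
  · exfalso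
    rw [← hL0] at hη1
    simp at hη1
    linarith
  have hηL : η * L < 1 := by
    rw [lt_div_iff₀ hLpos] at hη1
    linarith
  obtain ⟨M₁, hM₁⟩ := eventually_atTop.mp (htop.eventually_ge_atTop 0)
  obtain ⟨M₂, hM₂⟩ := eventually_atBot.mp (hbot.eventually_le_atBot 0)
  set M : ℝ := max (max M₁ (-M₂)) 0 with hM
  have hM0 : 0 ≤ M := le_max_right _ _
  have h1 : 0 < 1 - η * L := by linarith
  set b : ℝ := max M ((M + η * R) / (1 - η * L)) with hb
  have hbM : M ≤ b := le_max_left _ _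
  have hb0 : 0 ≤ b := le_trans hM0 hbM
  have hkey : M + η * (R + L * b) ≤ b := by
    have hge : (M + η * R) / (1 - η * L) ≤ b := le_max_right _ _
    rw [div_le_iff₀ h1] at hge
    nlinarith
  refine ⟨-b, b, by linarith, ?_⟩
  intro x hx
  simp only [mem_Icc] at hx ⊢
  have hxabs : |x| ≤ b := abs_le.mpr ⟨hx.1, hx.2⟩
  have hfb : |deriv f x| ≤ R + L * b := by
    have := hbnd x
    nlinarith
  have hfb' := abs_le.mp hfb
  constructor
  · by_cases hxM : x ≤ -M
    · have hf0 : deriv f x ≤ 0 := hM₂ x (by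
        have : -M₂ ≤ M := le_trans (le_max_right _ _) (le_max_left _ _)
        linarith)
      nlinarith
    · push_neg at hxM
      nlinarith
  · by_cases hxM : M ≤ x
    · have hf0 : 0 ≤ deriv f x := hM₁ x (by
        have : M₁ ≤ M := le_trans (le_max_left _ _) (le_max_left _ _)
        linarith)
      nlinarith
    · push_neg at hxM
      nlinarith
end

section
/- Let f₀ : ℝ → ℝ be C¹ with f₀'(x) = 4kx(x²-1), k > 3√3/8, and let ζ be a random variable with |ζ| ≤ 1 almost surely. Define the stochastic map x ↦ x - ηf₀'(x) + ηζ. Then the set S = {x : |f₀'(x)| ≤ 1} has (at least) two connected components S⁻ ⊂ (-∞,0) and S⁺ ⊂ (0,∞), and for sufficiently small η > 0, a trajectory started in S⁺ remains in S⁺'s basin almost surely: if x ∈ S⁺ then x - ηf₀'(x) + ηζ cannot lie in S⁻. -/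
open Set

/-- for `f₀(x) = k(x²-1)²` with `k > 3√3/8`, the set `S = {x : |f₀'(x)| ≤ 1}`
has connected components `S⁺ ∋ 1` contained in `(0,∞)` and `S⁻ ∋ -1` contained in `(-∞,0)`,
and for sufficiently small `η > 0` the bounded-noise stochastic map
`x ↦ x - ηf₀'(x) + ηζ` (with `|ζ| ≤ 1`) cannot send a point of `S⁺` into `S⁻`. -/
theorem stmt_9 (k : ℝ) (hk : 3 * Real.sqrt 3 / 8 < k) :
    let S : Set ℝ := {x : ℝ | |4 * k * x * (x ^ 2 - 1)| ≤ 1}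
    let Sp := connectedComponentIn S 1
    let Sm := connectedComponentIn S (-1)
    Sp ⊆ Ioi 0 ∧ Sm ⊆ Iio 0 ∧ Sp ≠ Sm ∧
      ∃ η₀ > 0, ∀ η z x : ℝ, 0 < η → η < η₀ → |z| ≤ 1 → x ∈ Sp →
        x - η * (4 * k * x * (x ^ 2 - 1)) + η * z ∉ Sm := by
  intro S Sp Sm
  have h3 : (0:ℝ) < Real.sqrt 3 := Real.sqrt_pos.2 (by norm_num)
  have hsq : Real.sqrt 3 ^ 2 = 3 := Real.sq_sqrt (by norm_num)
  have hk0 : 0 < k := lt_trans (by positivity) hk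
  set c : ℝ := Real.sqrt 3 / 3 with hc
  have hc0 : 0 < c := by positivity
  have hc1 : c ≤ 1 := by rw [hc]; nlinarith
  have hval : 4 * k * c * (c ^ 2 - 1) = -(8/9 * k * Real.sqrt 3) := by
    rw [hc]
    linear_combination (4 * k * Real.sqrt 3 / 27) * hsq
  have hbig : 1 < |4 * k * c * (c ^ 2 - 1)| := by
    rw [hval, abs_neg, abs_of_pos (by positivity)]
    nlinarith
  have hcS : c ∉ S := by
    intro h
    exact absurd h (not_le.2 hbig)
  have hncS : -c ∉ S := by
    intro h
    have he : 4 * k * (-c) * ((-c) ^ 2 - 1) = -(4 * k * c * (c ^ 2 - 1)) := by ring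
    have : |4 * k * (-c) * ((-c) ^ 2 - 1)| ≤ 1 := h
    rw [he, abs_neg] at this
    exact absurd this (not_le.2 hbig)
  have h1S : (1:ℝ) ∈ S := by
    show |4 * k * 1 * ((1:ℝ) ^ 2 - 1)| ≤ 1
    norm_num
  have hm1S : (-1:ℝ) ∈ S := by
    show |4 * k * (-1) * ((-1:ℝ) ^ 2 - 1)| ≤ 1
    norm_num
  have h1Sp : (1:ℝ) ∈ Sp := mem_connectedComponentIn h1S
  have hm1Sm : (-1:ℝ) ∈ Sm := mem_connectedComponentIn hm1S
  have hSpOrd : OrdConnected Sp :=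
    (isPreconnected_connectedComponentIn).ordConnected
  have hSmOrd : OrdConnected Sm :=
    (isPreconnected_connectedComponentIn).ordConnected
  have hSpc : Sp ⊆ Ioi c := by
    intro x hx
    by_contra h
    simp only [mem_Ioi, not_lt] at h
    have : c ∈ Sp := hSpOrd.out hx h1Sp ⟨h, hc1⟩
    exact hcS (connectedComponentIn_subset S 1 this)
  have hSmc : Sm ⊆ Iio (-c) := by
    intro x hx
    by_contra h
    simp only [mem_Iio, not_lt] at h
    have : -c ∈ Sm := hSmOrd.out hm1Sm hx ⟨by linarith, h⟩
    exact hncS (connectedComponentIn_subset S (-1) this)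
  refine ⟨fun x hx => by have := hSpc hx; simp only [mem_Ioi] at this ⊢; linarith, fun x hx => by have := hSmc hx; simp only [mem_Iio] at this ⊢; linarith,
    ?_, c, hc0, ?_⟩
  · intro he
    have : (1:ℝ) ∈ Sm := he ▸ h1Sp
    have := hSmc this
    simp only [mem_Iio] at this
    linarith
  · intro η z x hη hηc hz hx hy
    have hxc : c < x := hSpc hx
    have hxS : x ∈ S := connectedComponentIn_subset S 1 hx
    have hf : |4 * k * x * (x ^ 2 - 1)| ≤ 1 := hxS
    have hf1 : 4 * k * x * (x ^ 2 - 1) ≤ 1 := (abs_le.1 hf).2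
    have hz1 : -1 ≤ z := (abs_le.1 hz).1
    have hy' : x - η * (4 * k * x * (x ^ 2 - 1)) + η * z < -c := hSmc hy
    have h1 : η * (4 * k * x * (x ^ 2 - 1)) ≤ η := by
      nlinarith
    have h2 : -η ≤ η * z := by nlinarith
    linarith
end

section
/- Let f₁ : ℝ → ℝ be C² and T-periodic with m := (1/T)∫₀^T ln|f₁''(y)| dy finite. Let f_{1,ε}(x) = ε f₁(x/ε). Then for any bounded interval Γ ⊂ ℝ with |Γ| > 0, E[ln|ε f_{1,ε}''(U_Γ)|] → m as ε → 0, where U_Γ is uniform on Γ. -/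
open MeasureTheory Filter intervalIntegral

private lemma periodic_deriv'' {f : ℝ → ℝ} {T : ℝ} (h : Function.Periodic f T) :
    Function.Periodic (deriv f) T := by
  intro x
  have h1 : (fun y => f (y + T)) = f := funext h
  have h2 : deriv (fun y => f (y + T)) x = deriv f (x + T) := deriv_comp_add_const f T x
  rw [h1] at h2
  exact h2.symm

private lemma periodic_intervalIntegrable' {g : ℝ → ℝ} {T : ℝ} (hT : 0 < T)
    (hg : Function.Periodic g T)
    (h0 : IntervalIntegrable g volume 0 T) :
    ∀ t₁ t₂ : ℝ, IntervalIntegrable g volume t₁ t₂ := by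
  have key : ∀ n : ℤ, IntervalIntegrable g volume (n * T) (n * T + T) := by
    intro n
    have h1 := h0.comp_sub_right (n * T)
    have h2 : (fun x => g (x - n * T)) = g := funext fun x => hg.sub_int_mul_eq n
    rw [h2] at h1
    convert h1 using 1 <;> ring
  have keyN : ∀ n : ℕ, IntervalIntegrable g volume (-(n * T)) (n * T) := by
    intro n
    induction n with
    | zero => simp
    | succ k ih =>
      have left : IntervalIntegrable g volume (-((k + 1 : ℕ) * T)) (-((k : ℕ) * T)) := by
        have := key (-(k + 1))
        convert this using 1 <;> push_cast <;> ring
      have right : IntervalIntegrable g volume ((k : ℕ) * T) ((k + 1 : ℕ) * T) := by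
        have := key k
        convert this using 1 <;> push_cast <;> ring
      exact (left.trans ih).trans right
  intro t₁ t₂
  obtain ⟨n, hn⟩ := exists_nat_gt (max |t₁| |t₂| / T)
  have hnT : max |t₁| |t₂| ≤ n * T := by
    rw [div_lt_iff₀ hT] at hn
    exact hn.le
  have h1 : -((n : ℝ) * T) ≤ t₁ ∧ t₁ ≤ (n : ℝ) * T :=
    abs_le.mp (le_trans (le_max_left _ _) hnT)
  have h2 : -((n : ℝ) * T) ≤ t₂ ∧ t₂ ≤ (n : ℝ) * T :=
    abs_le.mp (le_trans (le_max_right _ _) hnT)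
  refine (keyN n).mono_set ?_
  refine Set.uIcc_subset_uIcc ?_ ?_ <;> rw [Set.mem_uIcc] <;> left
  · exact h1
  · exact h2

/-- for `f₁` C² and `T`-periodic with `m = (1/T)∫₀^T ln|f₁''|` finite, and any
bounded interval `Γ = [a,b]` with positive length, the average of `ln|ε f_{1,ε}''| = ln|f₁''(·/ε)|`
over a uniform point of `Γ` converges to `m` as `ε → 0⁺`. -/
theorem stmt_11 (f₁ : ℝ → ℝ) (T : ℝ) (hT : 0 < T)
    (hC2 : ContDiff ℝ 2 f₁) (hper : Function.Periodic f₁ T)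
    (hint : IntervalIntegrable (fun y => Real.log |deriv (deriv f₁) y|) volume 0 T)
    (m : ℝ) (hm : m = (1 / T) * ∫ y in (0:ℝ)..T, Real.log |deriv (deriv f₁) y|)
    (a b : ℝ) (hab : a < b)
    (hintε : ∀ ε : ℝ, 0 < ε →
      IntervalIntegrable (fun x => Real.log |deriv (deriv f₁) (x / ε)|) volume a b) :
    Tendsto (fun ε : ℝ => (b - a)⁻¹ * ∫ x in a..b, Real.log |deriv (deriv f₁) (x / ε)|)
      (nhdsWithin 0 (Set.Ioi 0)) (nhds m) := by
  set g : ℝ → ℝ := fun y => Real.log |deriv (deriv f₁) y| with hg_def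
  have hgper : Function.Periodic g T := by
    intro x
    simp only [hg_def]
    rw [periodic_deriv'' (periodic_deriv'' hper) x]
  have h_int : ∀ t₁ t₂ : ℝ, IntervalIntegrable g volume t₁ t₂ :=
    periodic_intervalIntegrable' hT hgper hint
  set G : ℝ → ℝ := fun t => ∫ x in (0:ℝ)..t, g x with hG_def
  have hGcont : Continuous G := intervalIntegral.continuous_primitive h_int 0
  set H : ℝ → ℝ := fun t => G t - m * t with hH_def
  have hmT : m * T = ∫ y in (0:ℝ)..T, g y := by
    rw [hm]
    field_simp
  have hHper : Function.Periodic H T := by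
    intro t
    have h1 : G (t + T) - G t = ∫ x in t..(t + T), g x :=
      integral_interval_sub_left (h_int 0 (t + T)) (h_int 0 t)
    have h2 : (∫ x in t..(t + T), g x) = ∫ x in (0:ℝ)..T, g x := by
      simpa using hgper.intervalIntegral_add_eq t 0
    have h3 : G (t + T) = G t + m * T := by
      rw [hmT, ← h2]
      linarith
    simp only [hH_def]
    rw [h3]
    ring
  have hHcont : Continuous H := hGcont.sub (continuous_const.mul continuous_id)
  obtain ⟨C, hC⟩ : ∃ C : ℝ, ∀ t, |H t| ≤ C := by
    obtain ⟨C, hC⟩ := isBounded_iff_forall_norm_le.mp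
      (hHper.isBounded_of_continuous hT.ne' hHcont)
    exact ⟨C, fun t => by simpa [Real.norm_eq_abs] using hC (H t) ⟨t, rfl⟩⟩
  have key : ∀ ε : ℝ, 0 < ε →
      (b - a)⁻¹ * (∫ x in a..b, g (x / ε)) =
      m + (b - a)⁻¹ * (ε * (H (b / ε) - H (a / ε))) := by
    intro ε hε
    have h1 : (∫ x in a..b, g (x / ε)) = ε * ∫ x in (a / ε)..(b / ε), g x := by
      rw [intervalIntegral.integral_comp_div g hε.ne']
      simp [smul_eq_mul]
    have h2 : (∫ x in (a / ε)..(b / ε), g x) = G (b / ε) - G (a / ε) :=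
      (integral_interval_sub_left (h_int 0 (b / ε)) (h_int 0 (a / ε))).symm
    have hba : b - a ≠ 0 := sub_ne_zero.mpr hab.ne'
    rw [h1, h2]
    simp only [hH_def]
    field_simp
    ring
  have h0 : Tendsto (fun ε : ℝ => ε * (H (b / ε) - H (a / ε)))
      (nhdsWithin 0 (Set.Ioi 0)) (nhds 0) := by
    apply squeeze_zero_norm' (a := fun ε : ℝ => ε * (2 * C))
    · filter_upwards [self_mem_nhdsWithin] with ε hε
      have hε' : (0 : ℝ) < ε := hε
      have hd : |H (b / ε) - H (a / ε)| ≤ 2 * C := by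
        calc |H (b / ε) - H (a / ε)| ≤ |H (b / ε)| + |H (a / ε)| := abs_sub _ _
          _ ≤ C + C := add_le_add (hC _) (hC _)
          _ = 2 * C := by ring
      calc ‖ε * (H (b / ε) - H (a / ε))‖
          = ε * |H (b / ε) - H (a / ε)| := by
            rw [Real.norm_eq_abs, abs_mul, abs_of_pos hε']
        _ ≤ ε * (2 * C) := mul_le_mul_of_nonneg_left hd hε'.le
    · have h1 : Tendsto (fun ε : ℝ => ε) (nhdsWithin 0 (Set.Ioi 0)) (nhds 0) :=
        tendsto_id.mono_left nhdsWithin_le_nhds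
      simpa using h1.mul_const (2 * C)
  have hto : Tendsto (fun ε : ℝ => m + (b - a)⁻¹ * (ε * (H (b / ε) - H (a / ε))))
      (nhdsWithin 0 (Set.Ioi 0)) (nhds m) := by
    have := Tendsto.const_add m (h0.const_mul ((b - a)⁻¹))
    simpa using this
  refine Tendsto.congr' ?_ hto
  filter_upwards [self_mem_nhdsWithin] with ε hε
  exact (key ε hε).symm
end
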